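/- For every k ≥ 10, the porous exponential domination number of the k-th Apollonian network satisfies γ*_e(G_k) ≤ (3^(k-8) + 5)/2. -/

import Mathlib

/-- A family of Apollonian networks, given by a vertex set `Vert` together with a
generation labeling `gen` and an adjacency relation `adj`, satisfying the recursive
construction: the first generation `U₁` consists of three pairwise adjacent vertices
(forming `G₁`); and for each `k ≥ 1`, for each vertex `u` of generation `k` and each
adjacent pair `{x, y}` of neighbors of `u` in `G_k`, exactly one new vertex of
generation `k + 1` is created, adjacent to exactly `u`, `x`, and `y`.
The `k`-th Apollonian network `G_k` is the induced subgraph on the vertices of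
generation at most `k`. -/
structure ApollonianNetwork where
  Vert : Type
  adj : Vert → Vert → Prop
  adj_symm : ∀ a b, adj a b → adj b a
  adj_irrefl : ∀ a, ¬ adj a a
  gen : Vert → ℕ
  gen_pos : ∀ v, 1 ≤ gen v
  /-- The first generation consists of exactly three vertices. -/
  U1_card : ∃ a b c : Vert, a ≠ b ∧ a ≠ c ∧ b ≠ c ∧ {v | gen v = 1} = {a, b, c}
  /-- `G₁` is a complete graph on the first generation. -/
  U1_complete : ∀ a b, gen a = 1 → gen b = 1 → a ≠ b → adj a b
  /-- All edges join vertices of distinct generations, except within generation 1. -/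
  adj_gen : ∀ a b, adj a b → gen a = gen b → gen a = 1
  /-- Every vertex `v` of generation `k ≥ 2` is adjacent, among the vertices of earlier
  generations, to exactly three vertices `u`, `x`, `y`, where `u` has generation `k - 1`
  and `x`, `y` are neighbors of `u` in `G_{k-1}` that are adjacent to each other. -/
  created : ∀ v, 2 ≤ gen v → ∃ u x y,
    gen u = gen v - 1 ∧ gen x ≤ gen v - 1 ∧ gen y ≤ gen v - 1 ∧
    adj u x ∧ adj u y ∧ adj x y ∧
    {w | adj v w ∧ gen w < gen v} = {u, x, y}
  /-- For each `k ≥ 1`, each vertex `u` of generation `k`, and each adjacent pair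
  `{x, y}` of neighbors of `u` in `G_k`, there is exactly one vertex of generation
  `k + 1` whose neighbors in `G_{k+1}` are exactly `u`, `x`, and `y`. -/
  attach : ∀ k, 1 ≤ k → ∀ u x y,
    gen u = k → gen x ≤ k → gen y ≤ k → x ≠ y →
    adj u x → adj u y → adj x y →
    ∃! v, gen v = k + 1 ∧ {w | adj v w ∧ gen w ≤ k} = ({u, x, y} : Set Vert)

/-- The `k`-th Apollonian network `G_k`: the induced subgraph on the vertices of
generation at most `k`. -/
def ApollonianNetwork.G (A : ApollonianNetwork) (k : ℕ) :
    SimpleGraph {v : A.Vert // A.gen v ≤ k} where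
  Adj a b := A.adj a b
  symm := ⟨fun a b h => A.adj_symm a b h⟩
  loopless := ⟨fun a h => A.adj_irrefl a h⟩

open Classical in
/-- The porous exponential domination weight of a set `S` at a vertex `v`:
`∑_{u ∈ S} 1 / 2 ^ (d(u, v) - 1)`, where vertices at infinite distance from `v`
contribute `0`.  (Note `2 * (1/2) ^ d = 1 / 2 ^ (d - 1)` including for `d = 0`.) -/
noncomputable def expWeight {V : Type*} (G : SimpleGraph V) (S : Finset V) (v : V) : ℝ :=
  ∑ u ∈ S, if G.Reachable u v then 2 * (2 : ℝ)⁻¹ ^ G.dist u v else 0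

/-- `S` is a porous exponential dominating set for `G` if every vertex receives
total weight at least 1. -/
def IsPorousExpDomSet {V : Type*} (G : SimpleGraph V) (S : Finset V) : Prop :=
  ∀ v, 1 ≤ expWeight G S v

/-- The porous exponential domination number `γ*ₑ(G)`: the smallest cardinality of a
porous exponential dominating set for `G` (`⊤` if there is none). -/
noncomputable def porousExpDomNum {V : Type*} (G : SimpleGraph V) : ℕ∞ :=
  sInf {n : ℕ∞ | ∃ S : Finset V, IsPorousExpDomSet G S ∧ (S.card : ℕ∞) = n}

namespace ApollonianNetwork

variable {A : ApollonianNetwork}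

lemma adj_ne {a b : A.Vert} (h : A.adj a b) : a ≠ b := by
  rintro rfl; exact A.adj_irrefl a h

/-- The down-neighborhood of a vertex of generation ≥ 2. -/
lemma dn3 (u : A.Vert) (h2 : 2 ≤ A.gen u) :
    ∃ p q r : A.Vert, A.gen p + 1 = A.gen u ∧ A.gen q < A.gen u ∧ A.gen r < A.gen u ∧
      A.adj u p ∧ A.adj u q ∧ A.adj u r ∧ A.adj p q ∧ A.adj p r ∧ A.adj q r ∧
      {w | A.adj u w ∧ A.gen w < A.gen u} = {p, q, r} := by
  obtain ⟨p, q, r, hp, hq, hr, hpq, hpr, hqr, hset⟩ := A.created u h2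
  have hp' : A.gen p + 1 = A.gen u := by omega
  have hpmem : p ∈ {w | A.adj u w ∧ A.gen w < A.gen u} := by
    rw [hset]; exact Set.mem_insert _ _
  have hqmem : q ∈ {w | A.adj u w ∧ A.gen w < A.gen u} := by
    rw [hset]; exact Set.mem_insert_of_mem _ (Set.mem_insert _ _)
  have hrmem : r ∈ {w | A.adj u w ∧ A.gen w < A.gen u} := by
    rw [hset]; exact Set.mem_insert_of_mem _ (Set.mem_insert_of_mem _ rfl)
  exact ⟨p, q, r, hp', hqmem.2, hrmem.2, hpmem.1, hqmem.1, hrmem.1, hpq, hpr, hqr, hset⟩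

/-- Strict version: for generation ≥ 3, the two non-parent down-neighbors drop by ≥ 2. -/
lemma dn3' (u : A.Vert) (h3 : 3 ≤ A.gen u) :
    ∃ p q r : A.Vert, A.gen p + 1 = A.gen u ∧ A.gen q + 2 ≤ A.gen u ∧ A.gen r + 2 ≤ A.gen u ∧
      A.adj u p ∧ A.adj u q ∧ A.adj u r ∧ A.adj p q ∧ A.adj p r ∧ A.adj q r ∧
      {w | A.adj u w ∧ A.gen w < A.gen u} = {p, q, r} := by
  obtain ⟨p, q, r, hp, hq, hr, hup, huq, hur, hpq, hpr, hqr, hset⟩ := A.dn3 u (by omega)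
  have hq2 : A.gen q + 2 ≤ A.gen u := by
    rcases Nat.lt_or_ge (A.gen q + 1) (A.gen u) with h | h
    · omega
    · exfalso
      have : A.gen p = A.gen q := by omega
      have := A.adj_gen p q hpq this
      omega
  have hr2 : A.gen r + 2 ≤ A.gen u := by
    rcases Nat.lt_or_ge (A.gen r + 1) (A.gen u) with h | h
    · omega
    · exfalso
      have : A.gen p = A.gen r := by omega
      have := A.adj_gen p r hpr this
      omega
  exact ⟨p, q, r, hp, hq2, hr2, hup, huq, hur, hpq, hpr, hqr, hset⟩

/-- pick an element of a 3-element set avoiding two given elements -/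
lemma pick3 {α : Type*} {a b c : α} (y z : α) (hab : a ≠ b) (hac : a ≠ c) (hbc : b ≠ c) :
    ∃ t, (t = a ∨ t = b ∨ t = c) ∧ t ≠ y ∧ t ≠ z := by
  by_cases hay : a = y
  · -- a excluded; choose among b, c
    by_cases hbz : b = z
    · exact ⟨c, Or.inr (Or.inr rfl), fun h => hac (hay ▸ h ▸ rfl), fun h => hbc (hbz.trans h.symm)⟩
    · by_cases hby : b = y
      · exact ⟨c, Or.inr (Or.inr rfl), fun h => hbc (hby.trans h.symm),
          fun h => hab (hay.trans (hby.symm))⟩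
      · exact ⟨b, Or.inr (Or.inl rfl), hby, hbz⟩
  · by_cases haz : a = z
    · by_cases hby : b = y
      · exact ⟨c, Or.inr (Or.inr rfl), fun h => hbc (hby.trans h.symm),
          fun h => hac (haz.trans h.symm)⟩
      · exact ⟨b, Or.inr (Or.inl rfl), hby, fun h => hab (haz.trans h.symm)⟩
    · exact ⟨a, Or.inl rfl, hay, haz⟩

end ApollonianNetwork
namespace ApollonianNetwork

variable {A : ApollonianNetwork}

/-- every vertex of generation ≥ 4 has a neighbor whose generation is smaller by ≥ 3 -/
lemma drop3 (v : A.Vert) (h4 : 4 ≤ A.gen v) :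
    ∃ b, A.adj v b ∧ A.gen b + 3 ≤ A.gen v := by
  obtain ⟨p, q, r, hp, hq, hr, hvp, hvq, hvr, hpq, hpr, hqr, hset⟩ := A.dn3' v (by omega)
  obtain ⟨p', q', r', hp', hq', hr', hpp', hpq', hpr', _, _, _, hset'⟩ :=
    A.dn3' p (by omega)
  -- q, r belong to the down-neighborhood of p
  have hqmem : q ∈ ({p', q', r'} : Set A.Vert) := by
    rw [← hset']; exact ⟨hpq, by omega⟩
  have hrmem : r ∈ ({p', q', r'} : Set A.Vert) := by
    rw [← hset']; exact ⟨hpr, by omega⟩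
  have hqr' : q ≠ r := adj_ne hqr
  -- at most one of q, r can be p'
  rcases hqmem with hq1 | hq1 | hq1
  · -- q = p'; then r ∈ {q', r'}
    rcases hrmem with hr1 | hr1 | hr1
    · exact absurd (hq1.trans hr1.symm) hqr'
    · exact ⟨r, hvr, by subst hr1; omega⟩
    · exact ⟨r, hvr, by subst hr1; omega⟩
  · exact ⟨q, hvq, by subst hq1; omega⟩
  · exact ⟨q, hvq, by subst hq1; omega⟩

/-- the two generation-1 partners of a generation-1 vertex -/
lemma U1_partners (x : A.Vert) (hx : A.gen x = 1) :
    ∃ p q, A.gen p = 1 ∧ A.gen q = 1 ∧ p ≠ q ∧ p ≠ x ∧ q ≠ x ∧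
      A.adj x p ∧ A.adj x q := by
  obtain ⟨a, b, c, hab, hac, hbc, hU⟩ := A.U1_card
  have ha : A.gen a = 1 := by
    have : a ∈ {v | A.gen v = 1} := by rw [hU]; exact Set.mem_insert _ _
    exact this
  have hb : A.gen b = 1 := by
    have : b ∈ {v | A.gen v = 1} := by
      rw [hU]; exact Set.mem_insert_of_mem _ (Set.mem_insert _ _)
    exact this
  have hc : A.gen c = 1 := by
    have : c ∈ {v | A.gen v = 1} := by
      rw [hU]; exact Set.mem_insert_of_mem _ (Set.mem_insert_of_mem _ rfl)
    exact this
  have hxmem : x ∈ ({a, b, c} : Set A.Vert) := by rw [← hU]; exact hx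
  rcases hxmem with rfl | rfl | rfl
  · exact ⟨b, c, hb, hc, hbc, fun h => hab h.symm, fun h => hac h.symm,
      A.U1_complete _ _ hx hb hab, A.U1_complete _ _ hx hc hac⟩
  · exact ⟨a, c, ha, hc, hac, hab, fun h => hbc h.symm,
      A.U1_complete _ _ hx ha (fun h => hab h.symm), A.U1_complete _ _ hx hc hbc⟩
  · exact ⟨a, b, ha, hb, hab, hac, hbc,
      A.U1_complete _ _ hx ha (fun h => hac h.symm), A.U1_complete _ _ hx hb (fun h => hbc h.symm)⟩

/-- third generation-1 vertex distinct from two given ones -/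
lemma U1_third (x y : A.Vert) (hx : A.gen x = 1) (hy : A.gen y = 1) (hxy : x ≠ y) :
    ∃ w, A.gen w = 1 ∧ w ≠ x ∧ w ≠ y ∧ A.adj x w := by
  obtain ⟨a, b, c, hab, hac, hbc, hU⟩ := A.U1_card
  obtain ⟨t, _, htx, hty⟩ := pick3 (a := a) (b := b) (c := c) x y hab hac hbc
  have ht1 : A.gen t = 1 := by
    have : t ∈ {v | A.gen v = 1} := by
      rw [hU]; rcases ‹t = a ∨ t = b ∨ t = c› with rfl | rfl | rfl
      · exact Set.mem_insert _ _
      · exact Set.mem_insert_of_mem _ (Set.mem_insert _ _)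
      · exact Set.mem_insert_of_mem _ (Set.mem_insert_of_mem _ rfl)
    exact this
  exact ⟨t, ht1, htx, hty, A.U1_complete x t hx ht1 (fun h => htx h.symm)⟩

/-- The key 5-vertex configuration around a vertex of generation ≥ 4:
`u, x, y` adjacent to `c` with generations dropping, `z` adjacent to `u`,
`w` adjacent to `x` or `y`, all five pairwise distinct, all of generation ≤ gen c - 2
except `u` which has generation `gen c - 1`. -/
lemma config5 (c : A.Vert) (h4 : 4 ≤ A.gen c) :
    ∃ u x y z w : A.Vert,
      A.adj c u ∧ A.adj c x ∧ A.adj c y ∧ A.adj u z ∧ (A.adj x w ∨ A.adj y w) ∧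
      A.gen u + 1 = A.gen c ∧ A.gen x + 2 ≤ A.gen c ∧ A.gen y + 2 ≤ A.gen c ∧
      A.gen z + 2 ≤ A.gen c ∧ A.gen w + 2 ≤ A.gen c ∧
      u ≠ x ∧ u ≠ y ∧ u ≠ z ∧ u ≠ w ∧ x ≠ y ∧ x ≠ z ∧ x ≠ w ∧ y ≠ z ∧ y ≠ w ∧ z ≠ w := by
  obtain ⟨u, x, y, hu, hx2, hy2, hcu, hcx, hcy, hux, huy, hxy, _⟩ := A.dn3' c (by omega)
  -- down-neighborhood of u
  obtain ⟨p₁, q₁, r₁, hp₁, hq₁, hr₁, hup₁, huq₁, hur₁, hp₁q₁, hp₁r₁, hq₁r₁, hsetu⟩ :=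
    A.dn3 u (by omega)
  have hxy' : x ≠ y := adj_ne hxy
  have hxu : A.gen x < A.gen u := by omega
  have hyu : A.gen y < A.gen u := by omega
  have hDu : ∀ t, (t = p₁ ∨ t = q₁ ∨ t = r₁) → A.adj u t ∧ A.gen t < A.gen u := by
    intro t ht
    have : t ∈ {w | A.adj u w ∧ A.gen w < A.gen u} := by
      rw [hsetu]
      rcases ht with rfl | rfl | rfl
      · exact Set.mem_insert _ _
      · exact Set.mem_insert_of_mem _ (Set.mem_insert _ _)
      · exact Set.mem_insert_of_mem _ (Set.mem_insert_of_mem _ rfl)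
    exact this
  have hne12 : p₁ ≠ q₁ := adj_ne hp₁q₁
  have hne13 : p₁ ≠ r₁ := adj_ne hp₁r₁
  have hne23 : q₁ ≠ r₁ := adj_ne hq₁r₁
  by_cases hxg : 2 ≤ A.gen x
  · -- z from dn(u) avoiding x y; w from dn(x) avoiding y z
    obtain ⟨z, hzmem, hzx, hzy⟩ := pick3 (a := p₁) (b := q₁) (c := r₁) x y hne12 hne13 hne23
    obtain ⟨huz, hzu⟩ := hDu z hzmem
    obtain ⟨p₂, q₂, r₂, hp₂, hq₂, hr₂, hxp₂, hxq₂, hxr₂, hp₂q₂, hp₂r₂, hq₂r₂, hsetx⟩ :=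
      A.dn3 x hxg
    obtain ⟨w, hwmem, hwy, hwz⟩ := pick3 (a := p₂) (b := q₂) (c := r₂) y z
      (adj_ne hp₂q₂) (adj_ne hp₂r₂) (adj_ne hq₂r₂)
    have hDx : A.adj x w ∧ A.gen w < A.gen x := by
      have : w ∈ {t | A.adj x t ∧ A.gen t < A.gen x} := by
        rw [hsetx]
        rcases hwmem with rfl | rfl | rfl
        · exact Set.mem_insert _ _
        · exact Set.mem_insert_of_mem _ (Set.mem_insert _ _)
        · exact Set.mem_insert_of_mem _ (Set.mem_insert_of_mem _ rfl)
      exact this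
    refine ⟨u, x, y, z, w, hcu, hcx, hcy, huz, Or.inl hDx.1, by omega, hx2, hy2, by omega,
      by omega, adj_ne hux, adj_ne huy, fun h => by have := congrArg A.gen h; omega, fun h => by have := congrArg A.gen h; have := hDx.2; omega, hxy', fun h => hzx h.symm, adj_ne hDx.1,
      fun h => hzy h.symm, fun h => hwy h.symm, fun h => hwz h.symm⟩
  · by_cases hyg : 2 ≤ A.gen y
    · -- z from dn(u) avoiding x y; w from dn(y) avoiding x z
      obtain ⟨z, hzmem, hzx, hzy⟩ := pick3 (a := p₁) (b := q₁) (c := r₁) x y hne12 hne13 hne23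
      obtain ⟨huz, hzu⟩ := hDu z hzmem
      obtain ⟨p₂, q₂, r₂, hp₂, hq₂, hr₂, hyp₂, hyq₂, hyr₂, hp₂q₂, hp₂r₂, hq₂r₂, hsety⟩ :=
        A.dn3 y hyg
      obtain ⟨w, hwmem, hwx, hwz⟩ := pick3 (a := p₂) (b := q₂) (c := r₂) x z
        (adj_ne hp₂q₂) (adj_ne hp₂r₂) (adj_ne hq₂r₂)
      have hDy : A.adj y w ∧ A.gen w < A.gen y := by
        have : w ∈ {t | A.adj y t ∧ A.gen t < A.gen y} := by
          rw [hsety]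
          rcases hwmem with rfl | rfl | rfl
          · exact Set.mem_insert _ _
          · exact Set.mem_insert_of_mem _ (Set.mem_insert _ _)
          · exact Set.mem_insert_of_mem _ (Set.mem_insert_of_mem _ rfl)
        exact this
      refine ⟨u, x, y, z, w, hcu, hcx, hcy, huz, Or.inr hDy.1, by omega, hx2, hy2, by omega,
        by omega, adj_ne hux, adj_ne huy, fun h => by have := congrArg A.gen h; omega, fun h => by have := congrArg A.gen h; have := hDy.2; omega, hxy', fun h => hzx h.symm, fun h => hwx h.symm,
        fun h => hzy h.symm, adj_ne hDy.1, fun h => hwz h.symm⟩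
    · -- both x, y of generation 1 : take z = p₁ (the parent of u), w = third U1 vertex
      have hx1 : A.gen x = 1 := by have := A.gen_pos x; omega
      have hy1 : A.gen y = 1 := by have := A.gen_pos y; omega
      obtain ⟨w, hw1, hwx, hwy, hxw⟩ := A.U1_third x y hx1 hy1 hxy'
      obtain ⟨hup, hpu⟩ := hDu p₁ (Or.inl rfl)
      have hp₁g : 2 ≤ A.gen p₁ := by omega
      refine ⟨u, x, y, p₁, w, hcu, hcx, hcy, hup, Or.inl hxw, by omega, by omega, by omega,
        by omega, by omega, adj_ne hux, adj_ne huy, fun h => by have := congrArg A.gen h; omega, fun h => by have := congrArg A.gen h; omega,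
        hxy', fun h => by have := congrArg A.gen h; omega, fun h => hwx h.symm, fun h => by have := congrArg A.gen h; omega,
        fun h => hwy h.symm, fun h => by have := congrArg A.gen h; omega⟩

end ApollonianNetwork
section Weight

open Finset SimpleGraph

variable {V : Type} (G : SimpleGraph V)

open Classical in
lemma term_ge (v s : V) (n : ℕ) (p : G.Walk s v) (hl : p.length ≤ n) :
    2 * (2:ℝ)⁻¹ ^ n ≤ (if G.Reachable s v then 2 * (2 : ℝ)⁻¹ ^ G.dist s v else 0) := by
  rw [if_pos p.reachable]
  have hd : G.dist s v ≤ n := le_trans (SimpleGraph.dist_le p) hl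
  have := pow_le_pow_of_le_one (by norm_num : (0:ℝ) ≤ 2⁻¹) (by norm_num) hd
  linarith

lemma helper_ge3 (S : Finset V) (v s₁ s₂ s₃ : V)
    (h₁ : s₁ ∈ S) (h₂ : s₂ ∈ S) (h₃ : s₃ ∈ S)
    (h12 : s₁ ≠ s₂) (h13 : s₁ ≠ s₃) (h23 : s₂ ≠ s₃)
    (p₁ : G.Walk s₁ v) (hp₁ : p₁.length ≤ 2)
    (p₂ : G.Walk s₂ v) (hp₂ : p₂.length ≤ 3)
    (p₃ : G.Walk s₃ v) (hp₃ : p₃.length ≤ 3) :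
    1 ≤ expWeight G S v := by
  classical
  unfold expWeight
  have hsub : ∑ u ∈ ({s₁, s₂, s₃} : Finset V),
      (if G.Reachable u v then 2 * (2 : ℝ)⁻¹ ^ G.dist u v else 0) ≤
      ∑ u ∈ S, (if G.Reachable u v then 2 * (2 : ℝ)⁻¹ ^ G.dist u v else 0) := by
    apply Finset.sum_le_sum_of_subset_of_nonneg
    · intro t ht
      simp only [Finset.mem_insert, Finset.mem_singleton] at ht
      rcases ht with rfl | rfl | rfl <;> assumption
    · intro i hi _
      split <;> positivity
  refine le_trans ?_ hsub
  rw [show ({s₁, s₂, s₃} : Finset V) = insert s₁ (insert s₂ {s₃}) from rfl,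
    Finset.sum_insert (by simp [h12, h13]), Finset.sum_insert (by simp [h23]),
    Finset.sum_singleton]
  have t₁ := term_ge G v s₁ 2 p₁ hp₁
  have t₂ := term_ge G v s₂ 3 p₂ hp₂
  have t₃ := term_ge G v s₃ 3 p₃ hp₃
  have : 2 * (2:ℝ)⁻¹ ^ 2 + 2 * (2:ℝ)⁻¹ ^ 3 + 2 * (2:ℝ)⁻¹ ^ 3 = 1 := by norm_num
  linarith

lemma helper_ge5 (S : Finset V) (v s₁ s₂ s₃ s₄ s₅ : V)
    (h₁ : s₁ ∈ S) (h₂ : s₂ ∈ S) (h₃ : s₃ ∈ S) (h₄ : s₄ ∈ S) (h₅ : s₅ ∈ S)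
    (h12 : s₁ ≠ s₂) (h13 : s₁ ≠ s₃) (h14 : s₁ ≠ s₄) (h15 : s₁ ≠ s₅)
    (h23 : s₂ ≠ s₃) (h24 : s₂ ≠ s₄) (h25 : s₂ ≠ s₅)
    (h34 : s₃ ≠ s₄) (h35 : s₃ ≠ s₅) (h45 : s₄ ≠ s₅)
    (p₁ : G.Walk s₁ v) (hp₁ : p₁.length ≤ 3)
    (p₂ : G.Walk s₂ v) (hp₂ : p₂.length ≤ 3)
    (p₃ : G.Walk s₃ v) (hp₃ : p₃.length ≤ 3)
    (p₄ : G.Walk s₄ v) (hp₄ : p₄.length ≤ 4)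
    (p₅ : G.Walk s₅ v) (hp₅ : p₅.length ≤ 4) :
    1 ≤ expWeight G S v := by
  classical
  unfold expWeight
  have hsub : ∑ u ∈ ({s₁, s₂, s₃, s₄, s₅} : Finset V),
      (if G.Reachable u v then 2 * (2 : ℝ)⁻¹ ^ G.dist u v else 0) ≤
      ∑ u ∈ S, (if G.Reachable u v then 2 * (2 : ℝ)⁻¹ ^ G.dist u v else 0) := by
    apply Finset.sum_le_sum_of_subset_of_nonneg
    · intro t ht
      simp only [Finset.mem_insert, Finset.mem_singleton] at ht
      rcases ht with rfl | rfl | rfl | rfl | rfl <;> assumption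
    · intro i hi _
      split <;> positivity
  refine le_trans ?_ hsub
  rw [show ({s₁, s₂, s₃, s₄, s₅} : Finset V) =
        insert s₁ (insert s₂ (insert s₃ (insert s₄ {s₅}))) from rfl,
    Finset.sum_insert (by simp [h12, h13, h14, h15]),
    Finset.sum_insert (by simp [h23, h24, h25]),
    Finset.sum_insert (by simp [h34, h35]),
    Finset.sum_insert (by simp [h45]),
    Finset.sum_singleton]
  have t₁ := term_ge G v s₁ 3 p₁ hp₁
  have t₂ := term_ge G v s₂ 3 p₂ hp₂
  have t₃ := term_ge G v s₃ 3 p₃ hp₃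
  have t₄ := term_ge G v s₄ 4 p₄ hp₄
  have t₅ := term_ge G v s₅ 4 p₅ hp₅
  have : 2 * (2:ℝ)⁻¹ ^ 3 + 2 * (2:ℝ)⁻¹ ^ 3 + 2 * (2:ℝ)⁻¹ ^ 3 +
      2 * (2:ℝ)⁻¹ ^ 4 + 2 * (2:ℝ)⁻¹ ^ 4 = 1 := by norm_num
  linarith

end Weight
namespace ApollonianNetwork

variable {A : ApollonianNetwork}

lemma exists_near (m : ℕ) (hm : 3 ≤ m) (v : A.Vert) (hv : A.gen v ≤ m + 7) :
    ∃ c, A.gen c ≤ m + 1 ∧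
      (c = v ∨ A.adj v c ∨ ∃ b, A.adj v b ∧ A.adj b c ∧ A.gen b ≤ m + 4) := by
  by_cases h1 : A.gen v ≤ m + 1
  · exact ⟨v, h1, Or.inl rfl⟩
  · obtain ⟨b, hvb, hbg⟩ := A.drop3 v (by omega)
    by_cases h2 : A.gen b ≤ m + 1
    · exact ⟨b, h2, Or.inr (Or.inl hvb)⟩
    · obtain ⟨c, hbc, hcg⟩ := A.drop3 b (by omega)
      exact ⟨c, by omega, Or.inr (Or.inr ⟨b, hvb, hbc, by omega⟩)⟩

lemma dom (m k : ℕ) (hm : 3 ≤ m) (hk : k = m + 7)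
    (S : Finset {v : A.Vert // A.gen v ≤ k})
    (hS : ∀ s : {v : A.Vert // A.gen v ≤ k}, s ∈ S ↔ A.gen s.1 ≤ m) :
    IsPorousExpDomSet (A.G k) S := by
  rintro ⟨v, hvk⟩
  obtain ⟨c, hc, hpath⟩ := A.exists_near m hm v (by omega)
  have hck : A.gen c ≤ k := by omega
  obtain ⟨W, hW⟩ : ∃ W : (A.G k).Walk (⟨v, hvk⟩ : {v // A.gen v ≤ k}) ⟨c, hck⟩,
      W.length ≤ 2 := by
    rcases hpath with rfl | hadj | ⟨b, hvb, hbc, hbg⟩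
    · exact ⟨SimpleGraph.Walk.nil, by simp⟩
    · exact ⟨SimpleGraph.Walk.cons (show (A.G k).Adj ⟨v, hvk⟩ ⟨c, hck⟩ from hadj) SimpleGraph.Walk.nil, by simp⟩
    · have hbk : A.gen b ≤ k := by omega
      exact ⟨SimpleGraph.Walk.cons (show (A.G k).Adj ⟨v, hvk⟩ ⟨b, hbk⟩ from hvb)
        (SimpleGraph.Walk.cons (show (A.G k).Adj ⟨b, hbk⟩ ⟨c, hck⟩ from hbc)
          SimpleGraph.Walk.nil), by simp⟩
  have hmk : m ≤ k := by omega
  -- case analysis on the generation of c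
  rcases Nat.lt_or_ge (A.gen c) 2 with hc2 | hc2
  · -- generation 1
    have hc1 : A.gen c = 1 := by have := A.gen_pos c; omega
    obtain ⟨p, q, hp1, hq1, hpq, hpc, hqc, hcp, hcq⟩ := A.U1_partners c hc1
    have hpk : A.gen p ≤ k := by omega
    have hqk : A.gen q ≤ k := by omega
    refine helper_ge3 (A.G k) S ⟨v, hvk⟩ ⟨c, hck⟩ ⟨p, hpk⟩ ⟨q, hqk⟩
      ((hS _).mpr (show A.gen c ≤ m by omega)) ((hS _).mpr (show A.gen p ≤ m by omega))
      ((hS _).mpr (show A.gen q ≤ m by omega))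
      (by simp [Subtype.ext_iff]; exact fun h => hpc h.symm)
      (by simp [Subtype.ext_iff]; exact fun h => hqc h.symm)
      (by simp [Subtype.ext_iff]; exact hpq)
      W.reverse (by simpa using hW)
      (W.concat (show (A.G k).Adj ⟨c, hck⟩ ⟨p, hpk⟩ from hcp)).reverse (by
        simp [SimpleGraph.Walk.length_concat]; omega)
      (W.concat (show (A.G k).Adj ⟨c, hck⟩ ⟨q, hqk⟩ from hcq)).reverse (by
        simp [SimpleGraph.Walk.length_concat]; omega)
  · rcases Nat.lt_or_ge m (A.gen c) with hcm | hcm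
    · -- generation exactly m + 1
      have hc4 : 4 ≤ A.gen c := by omega
      obtain ⟨u, x, y, z, w, hcu, hcx, hcy, huz, hxw, hu, hx, hy, hz, hw,
        hux, huy, huz', huw, hxy, hxz, hxw', hyz, hyw, hzw⟩ := A.config5 c hc4
      have huk : A.gen u ≤ k := by omega
      have hxk : A.gen x ≤ k := by omega
      have hyk : A.gen y ≤ k := by omega
      have hzk : A.gen z ≤ k := by omega
      have hwk : A.gen w ≤ k := by omega
      have pw : ∃ P : (A.G k).Walk (⟨w, hwk⟩ : {v // A.gen v ≤ k}) ⟨v, hvk⟩,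
          P.length ≤ 4 := by
        rcases hxw with hxw | hyw'
        · exact ⟨((W.concat (show (A.G k).Adj ⟨c, hck⟩ ⟨x, hxk⟩ from hcx)).concat
            (show (A.G k).Adj ⟨x, hxk⟩ ⟨w, hwk⟩ from hxw)).reverse, by
              simp [SimpleGraph.Walk.length_concat]; omega⟩
        · exact ⟨((W.concat (show (A.G k).Adj ⟨c, hck⟩ ⟨y, hyk⟩ from hcy)).concat
            (show (A.G k).Adj ⟨y, hyk⟩ ⟨w, hwk⟩ from hyw')).reverse, by
              simp [SimpleGraph.Walk.length_concat]; omega⟩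
      obtain ⟨Pw, hPw⟩ := pw
      refine helper_ge5 (A.G k) S ⟨v, hvk⟩ ⟨u, huk⟩ ⟨x, hxk⟩ ⟨y, hyk⟩ ⟨z, hzk⟩ ⟨w, hwk⟩
        ((hS _).mpr (show A.gen u ≤ m by omega)) ((hS _).mpr (show A.gen x ≤ m by omega))
        ((hS _).mpr (show A.gen y ≤ m by omega)) ((hS _).mpr (show A.gen z ≤ m by omega))
        ((hS _).mpr (show A.gen w ≤ m by omega))
        (by simp [Subtype.ext_iff]; exact hux) (by simp [Subtype.ext_iff]; exact huy)
        (by simp [Subtype.ext_iff]; exact huz') (by simp [Subtype.ext_iff]; exact huw)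
        (by simp [Subtype.ext_iff]; exact hxy) (by simp [Subtype.ext_iff]; exact hxz)
        (by simp [Subtype.ext_iff]; exact hxw') (by simp [Subtype.ext_iff]; exact hyz)
        (by simp [Subtype.ext_iff]; exact hyw) (by simp [Subtype.ext_iff]; exact hzw)
        (W.concat (show (A.G k).Adj ⟨c, hck⟩ ⟨u, huk⟩ from hcu)).reverse (by
          simp [SimpleGraph.Walk.length_concat]; omega)
        (W.concat (show (A.G k).Adj ⟨c, hck⟩ ⟨x, hxk⟩ from hcx)).reverse (by
          simp [SimpleGraph.Walk.length_concat]; omega)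
        (W.concat (show (A.G k).Adj ⟨c, hck⟩ ⟨y, hyk⟩ from hcy)).reverse (by
          simp [SimpleGraph.Walk.length_concat]; omega)
        (((W.concat (show (A.G k).Adj ⟨c, hck⟩ ⟨u, huk⟩ from hcu)).concat
          (show (A.G k).Adj ⟨u, huk⟩ ⟨z, hzk⟩ from huz)).reverse) (by
          simp [SimpleGraph.Walk.length_concat]; omega)
        Pw hPw
    · -- generation between 2 and m
      obtain ⟨p, q, r, hp, hq, hr, hcp, hcq, hcr, hpq, hpr, hqr, hset⟩ := A.dn3 c hc2
      have hpk : A.gen p ≤ k := by omega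
      have hqk : A.gen q ≤ k := by omega
      refine helper_ge3 (A.G k) S ⟨v, hvk⟩ ⟨c, hck⟩ ⟨p, hpk⟩ ⟨q, hqk⟩
        ((hS _).mpr (show A.gen c ≤ m by omega)) ((hS _).mpr (show A.gen p ≤ m by omega))
        ((hS _).mpr (show A.gen q ≤ m by omega))
        (by simp [Subtype.ext_iff]; exact adj_ne hcp)
        (by simp [Subtype.ext_iff]; exact adj_ne hcq)
        (by simp [Subtype.ext_iff]; exact adj_ne hpq)
        W.reverse (by simpa using hW)
        (W.concat (show (A.G k).Adj ⟨c, hck⟩ ⟨p, hpk⟩ from hcp)).reverse (by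
          simp [SimpleGraph.Walk.length_concat]; omega)
        (W.concat (show (A.G k).Adj ⟨c, hck⟩ ⟨q, hqk⟩ from hcq)).reverse (by
          simp [SimpleGraph.Walk.length_concat]; omega)

end ApollonianNetwork
namespace ApollonianNetwork

variable {A : ApollonianNetwork}

lemma set3_eq {α : Type*} {a b c x y z : α} (hab : a ≠ b) (hac : a ≠ c) (hbc : b ≠ c)
    (hx : x = a ∨ x = b ∨ x = c) (hy : y = a ∨ y = b ∨ y = c) (hz : z = a ∨ z = b ∨ z = c)
    (hxy : x ≠ y) (hxz : x ≠ z) (hyz : y ≠ z) :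
    ({x, y, z} : Set α) = {a, b, c} := by
  ext t
  simp only [Set.mem_insert_iff, Set.mem_singleton_iff]
  rcases hx with rfl | rfl | rfl <;> rcases hy with rfl | rfl | rfl <;>
    rcases hz with rfl | rfl | rfl <;> tauto

open Classical in
/-- the unique attached vertex (as a choice function) -/
noncomputable def F (A : ApollonianNetwork) (u x y : A.Vert) : A.Vert :=
  if h : ∃! v, A.gen v = A.gen u + 1 ∧
      {w | A.adj v w ∧ A.gen w ≤ A.gen u} = ({u, x, y} : Set A.Vert) then h.choose else u

lemma F_eq {u x y v : A.Vert}
    (hex : ∃! v, A.gen v = A.gen u + 1 ∧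
      {w | A.adj v w ∧ A.gen w ≤ A.gen u} = ({u, x, y} : Set A.Vert))
    (hv : A.gen v = A.gen u + 1 ∧
      {w | A.adj v w ∧ A.gen w ≤ A.gen u} = ({u, x, y} : Set A.Vert)) :
    v = A.F u x y := by
  rw [F, dif_pos hex]
  exact hex.unique hv hex.choose_spec.1

/-- choice of the down-neighborhood triple -/
noncomputable def dt (A : ApollonianNetwork) (u : A.Vert) : A.Vert × A.Vert × A.Vert :=
  if h : 2 ≤ A.gen u then
    ⟨(A.created u h).choose, (A.created u h).choose_spec.choose,
      (A.created u h).choose_spec.choose_spec.choose⟩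
  else ⟨u, u, u⟩

lemma dt_spec (u : A.Vert) (h : 2 ≤ A.gen u) :
    A.gen (A.dt u).1 = A.gen u - 1 ∧ A.gen (A.dt u).2.1 ≤ A.gen u - 1 ∧
    A.gen (A.dt u).2.2 ≤ A.gen u - 1 ∧
    A.adj (A.dt u).1 (A.dt u).2.1 ∧ A.adj (A.dt u).1 (A.dt u).2.2 ∧
    A.adj (A.dt u).2.1 (A.dt u).2.2 ∧
    {w | A.adj u w ∧ A.gen w < A.gen u} = {(A.dt u).1, (A.dt u).2.1, (A.dt u).2.2} := by
  have h1 := (A.created u h).choose_spec.choose_spec.choose_spec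
  simp only [dt, dif_pos h]
  exact h1

lemma Uset_succ_subset (j : ℕ) (hj : 2 ≤ j) :
    {v : A.Vert | A.gen v = j + 1} ⊆
      (fun u => A.F u (A.dt u).1 (A.dt u).2.1) '' {v | A.gen v = j} ∪
      (fun u => A.F u (A.dt u).1 (A.dt u).2.2) '' {v | A.gen v = j} ∪
      (fun u => A.F u (A.dt u).2.1 (A.dt u).2.2) '' {v | A.gen v = j} := by
  intro v hv
  have hgv : A.gen v = j + 1 := hv
  obtain ⟨u, x, y, hgu, hgx, hgy, hux, huy, hxy, hsetv⟩ := A.created v (by omega)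
  rw [hgv] at hgu hgx hgy hsetv
  simp only [Nat.add_sub_cancel] at hgu hgx hgy
  have hxy' : x ≠ y := adj_ne hxy
  have hgx' : A.gen x < j := by
    rcases Nat.lt_or_ge (A.gen x) j with h | h
    · exact h
    · have hxj : A.gen x = j := le_antisymm hgx h
      have := A.adj_gen u x hux (by omega)
      omega
  have hgy' : A.gen y < j := by
    rcases Nat.lt_or_ge (A.gen y) j with h | h
    · exact h
    · have hyj : A.gen y = j := le_antisymm hgy h
      have := A.adj_gen u y huy (by omega)
      omega
  obtain ⟨hta, htb, htc, hab, hac, hbc, hsetu⟩ := A.dt_spec u (by omega)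
  set a := (A.dt u).1 with ha
  set b := (A.dt u).2.1 with hb
  set c := (A.dt u).2.2 with hc
  have hxmem : x ∈ ({a, b, c} : Set A.Vert) := by rw [← hsetu]; exact ⟨hux, by omega⟩
  have hymem : y ∈ ({a, b, c} : Set A.Vert) := by rw [← hsetu]; exact ⟨huy, by omega⟩
  have hadj : ∀ t, t ∈ ({a, b, c} : Set A.Vert) → A.adj u t ∧ A.gen t < A.gen u := by
    intro t ht
    have : t ∈ {w | A.adj u w ∧ A.gen w < A.gen u} := by rw [hsetu]; exact ht
    exact this
  have mk : ∀ α β : A.Vert, α ≠ β → A.adj u α → A.adj u β → A.adj α β →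
      A.gen α < j → A.gen β < j →
      ({u, x, y} : Set A.Vert) = {u, α, β} → v = A.F u α β := by
    intro α β hne h1 h2 h3 h4 h5 h7
    have hex : ∃! v', A.gen v' = A.gen u + 1 ∧
        {w | A.adj v' w ∧ A.gen w ≤ A.gen u} = ({u, α, β} : Set A.Vert) := by
      rw [hgu]
      exact A.attach j (by omega) u α β hgu (by omega) (by omega) hne h1 h2 h3
    refine F_eq hex ⟨by omega, ?_⟩
    rw [hgu, ← h7, ← hsetv]
    ext t
    simp only [Set.mem_setOf_eq]
    constructor
    · rintro ⟨h, h'⟩; exact ⟨h, by omega⟩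
    · rintro ⟨h, h'⟩; exact ⟨h, by omega⟩
  have humem : u ∈ {v : A.Vert | A.gen v = j} := hgu
  have pair_eq : ∀ α β : A.Vert, (x = α ∧ y = β) ∨ (x = β ∧ y = α) →
      ({u, x, y} : Set A.Vert) = {u, α, β} := by
    rintro α β (⟨rfl, rfl⟩ | ⟨rfl, rfl⟩)
    · rfl
    · rw [Set.pair_comm y x]
  rcases hxmem with hx1 | hx1 | hx1 <;> rcases hymem with hy1 | hy1 | hy1
  · exact absurd (hx1.trans hy1.symm) hxy'
  · exact Or.inl (Or.inl ⟨u, humem, (mk a b (adj_ne hab) (hadj a (by left; rfl)).1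
      (hadj b (by right; left; rfl)).1 hab (by rw [← hx1]; exact hgx')
      (by rw [← hy1]; exact hgy') (pair_eq a b (Or.inl ⟨hx1, hy1⟩))).symm⟩)
  · exact Or.inl (Or.inr ⟨u, humem, (mk a c (adj_ne hac) (hadj a (by left; rfl)).1
      (hadj c (by right; right; rfl)).1 hac (by rw [← hx1]; exact hgx')
      (by rw [← hy1]; exact hgy') (pair_eq a c (Or.inl ⟨hx1, hy1⟩))).symm⟩)
  · exact Or.inl (Or.inl ⟨u, humem, (mk a b (adj_ne hab) (hadj a (by left; rfl)).1
      (hadj b (by right; left; rfl)).1 hab (by rw [← hy1]; exact hgy')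
      (by rw [← hx1]; exact hgx') (pair_eq a b (Or.inr ⟨hx1, hy1⟩))).symm⟩)
  · exact absurd (hx1.trans hy1.symm) hxy'
  · exact Or.inr ⟨u, humem, (mk b c (adj_ne hbc) (hadj b (by right; left; rfl)).1
      (hadj c (by right; right; rfl)).1 hbc (by rw [← hx1]; exact hgx')
      (by rw [← hy1]; exact hgy') (pair_eq b c (Or.inl ⟨hx1, hy1⟩))).symm⟩
  · exact Or.inl (Or.inr ⟨u, humem, (mk a c (adj_ne hac) (hadj a (by left; rfl)).1
      (hadj c (by right; right; rfl)).1 hac (by rw [← hy1]; exact hgy')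
      (by rw [← hx1]; exact hgx') (pair_eq a c (Or.inr ⟨hx1, hy1⟩))).symm⟩)
  · exact Or.inr ⟨u, humem, (mk b c (adj_ne hbc) (hadj b (by right; left; rfl)).1
      (hadj c (by right; right; rfl)).1 hbc (by rw [← hy1]; exact hgy')
      (by rw [← hx1]; exact hgx') (pair_eq b c (Or.inr ⟨hx1, hy1⟩))).symm⟩
  · exact absurd (hx1.trans hy1.symm) hxy'

end ApollonianNetwork
namespace ApollonianNetwork

variable {A : ApollonianNetwork}

lemma U1_finite_card :
    {v : A.Vert | A.gen v = 1}.Finite ∧ {v : A.Vert | A.gen v = 1}.ncard ≤ 3 := by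
  obtain ⟨a, b, c, hab, hac, hbc, hU⟩ := A.U1_card
  rw [hU]
  constructor
  · exact (Set.finite_singleton c).insert b |>.insert a
  · calc ({a, b, c} : Set A.Vert).ncard ≤ ({b, c} : Set A.Vert).ncard + 1 :=
        Set.ncard_insert_le _ _
      _ ≤ (({c} : Set A.Vert).ncard + 1) + 1 := by
        have := Set.ncard_insert_le b ({c} : Set A.Vert)
        omega
      _ ≤ 3 := by rw [Set.ncard_singleton]

lemma U2_subsingleton : ∃ v₀ : A.Vert, {v : A.Vert | A.gen v = 2} ⊆ {v₀} := by
  obtain ⟨a, b, c, hab, hac, hbc, hU⟩ := A.U1_card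
  have hmem : ∀ t, A.gen t = 1 ↔ (t = a ∨ t = b ∨ t = c) := by
    intro t
    constructor
    · intro h
      have : t ∈ {v | A.gen v = 1} := h
      rw [hU] at this
      simpa using this
    · intro h
      have : t ∈ ({a, b, c} : Set A.Vert) := by simpa using h
      rw [← hU] at this
      exact this
  have ha : A.gen a = 1 := (hmem a).mpr (Or.inl rfl)
  have hb : A.gen b = 1 := (hmem b).mpr (Or.inr (Or.inl rfl))
  have hc : A.gen c = 1 := (hmem c).mpr (Or.inr (Or.inr rfl))
  obtain ⟨v₀, hv₀, huniq⟩ := A.attach 1 le_rfl a b c ha hb.le hc.le hbc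
    (A.U1_complete a b ha hb hab) (A.U1_complete a c ha hc hac)
    (A.U1_complete b c hb hc hbc)
  refine ⟨v₀, fun v hv => ?_⟩
  have hgv : A.gen v = 2 := hv
  obtain ⟨u, x, y, hgu, hgx, hgy, hux, huy, hxy, hsetv⟩ := A.created v (by omega)
  rw [hgv] at hgu hgx hgy hsetv
  simp only [show (2:ℕ) - 1 = 1 from rfl] at hgu hgx hgy
  have hgx1 : A.gen x = 1 := le_antisymm hgx (A.gen_pos x)
  have hgy1 : A.gen y = 1 := le_antisymm hgy (A.gen_pos y)
  have hset3 : ({u, x, y} : Set A.Vert) = {a, b, c} :=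
    set3_eq hab hac hbc ((hmem u).mp hgu) ((hmem x).mp hgx1) ((hmem y).mp hgy1)
      (adj_ne hux) (adj_ne huy) (adj_ne hxy)
  have : v = v₀ := by
    apply huniq
    refine ⟨hgv, ?_⟩
    rw [← hset3, ← hsetv]
    ext t
    simp only [Set.mem_setOf_eq]
    constructor
    · rintro ⟨h, h'⟩; exact ⟨h, by omega⟩
    · rintro ⟨h, h'⟩; exact ⟨h, by omega⟩
  exact this

lemma Uset_finite_card : ∀ j, 2 ≤ j →
    {v : A.Vert | A.gen v = j}.Finite ∧ {v : A.Vert | A.gen v = j}.ncard ≤ 3 ^ (j - 2) := by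
  intro j hj
  induction j, hj using Nat.le_induction with
  | base =>
    obtain ⟨v₀, hsub⟩ := A.U2_subsingleton
    refine ⟨Set.Finite.subset (Set.finite_singleton v₀) hsub, ?_⟩
    calc {v : A.Vert | A.gen v = 2}.ncard ≤ ({v₀} : Set A.Vert).ncard :=
        Set.ncard_le_ncard hsub (Set.finite_singleton v₀)
      _ ≤ 3 ^ (2 - 2) := by rw [Set.ncard_singleton]; norm_num
  | succ j hj ih =>
    obtain ⟨hfin, hcard⟩ := ih
    have hsub := A.Uset_succ_subset j hj
    have hf1 := hfin.image (fun u => A.F u (A.dt u).1 (A.dt u).2.1)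
    have hf2 := hfin.image (fun u => A.F u (A.dt u).1 (A.dt u).2.2)
    have hf3 := hfin.image (fun u => A.F u (A.dt u).2.1 (A.dt u).2.2)
    have hufin := (hf1.union hf2).union hf3
    refine ⟨Set.Finite.subset hufin hsub, ?_⟩
    have h1 : {v : A.Vert | A.gen v = j + 1}.ncard ≤
        (((fun u => A.F u (A.dt u).1 (A.dt u).2.1) '' {v | A.gen v = j}) ∪
          ((fun u => A.F u (A.dt u).1 (A.dt u).2.2) '' {v | A.gen v = j}) ∪
          ((fun u => A.F u (A.dt u).2.1 (A.dt u).2.2) '' {v | A.gen v = j})).ncard :=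
      Set.ncard_le_ncard hsub hufin
    have h2 := Set.ncard_union_le
      (((fun u => A.F u (A.dt u).1 (A.dt u).2.1) '' {v : A.Vert | A.gen v = j}) ∪
        ((fun u => A.F u (A.dt u).1 (A.dt u).2.2) '' {v | A.gen v = j}))
      ((fun u => A.F u (A.dt u).2.1 (A.dt u).2.2) '' {v | A.gen v = j})
    have h3 := Set.ncard_union_le
      ((fun u => A.F u (A.dt u).1 (A.dt u).2.1) '' {v : A.Vert | A.gen v = j})
      ((fun u => A.F u (A.dt u).1 (A.dt u).2.2) '' {v | A.gen v = j})
    have h4 := Set.ncard_image_le (f := fun u => A.F u (A.dt u).1 (A.dt u).2.1) hfin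
    have h5 := Set.ncard_image_le (f := fun u => A.F u (A.dt u).1 (A.dt u).2.2) hfin
    have h6 := Set.ncard_image_le (f := fun u => A.F u (A.dt u).2.1 (A.dt u).2.2) hfin
    have hpow : (3:ℕ) ^ (j - 2) * 3 = 3 ^ (j + 1 - 2) := by
      rw [show j + 1 - 2 = (j - 2) + 1 by omega, pow_succ]
    omega

lemma Vle_finite_card : ∀ m, 2 ≤ m →
    {v : A.Vert | A.gen v ≤ m}.Finite ∧
      2 * {v : A.Vert | A.gen v ≤ m}.ncard ≤ 3 ^ (m - 1) + 5 := by
  intro m hm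
  induction m, hm using Nat.le_induction with
  | base =>
    obtain ⟨h1fin, h1card⟩ := A.U1_finite_card
    obtain ⟨h2fin, h2card⟩ := A.Uset_finite_card 2 le_rfl
    have hsplit : {v : A.Vert | A.gen v ≤ 2} =
        {v | A.gen v = 1} ∪ {v | A.gen v = 2} := by
      ext t
      simp only [Set.mem_setOf_eq, Set.mem_union]
      have := A.gen_pos t
      omega
    rw [hsplit]
    refine ⟨h1fin.union h2fin, ?_⟩
    have := Set.ncard_union_le {v : A.Vert | A.gen v = 1} {v | A.gen v = 2}
    have h22 : (3:ℕ) ^ (2 - 2) = 1 := by norm_num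
    rw [h22] at h2card
    have : ({v : A.Vert | A.gen v = 1} ∪ {v | A.gen v = 2}).ncard ≤ 4 := by omega
    omega
  | succ m hm ih =>
    obtain ⟨hfin, hcard⟩ := ih
    obtain ⟨hufin, hucard⟩ := A.Uset_finite_card (m + 1) (by omega)
    have hsplit : {v : A.Vert | A.gen v ≤ m + 1} =
        {v | A.gen v ≤ m} ∪ {v | A.gen v = m + 1} := by
      ext t
      simp only [Set.mem_setOf_eq, Set.mem_union]
      omega
    rw [hsplit]
    refine ⟨hfin.union hufin, ?_⟩
    have hle := Set.ncard_union_le {v : A.Vert | A.gen v ≤ m} {v | A.gen v = m + 1}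
    have hpow : (3:ℕ) ^ (m - 1) * 3 = 3 ^ (m + 1 - 1) := by
      rw [show m + 1 - 1 = (m - 1) + 1 by omega, pow_succ]
    have hm1 : m + 1 - 2 = m - 1 := by omega
    rw [hm1] at hucard
    omega

end ApollonianNetwork
theorem stmt1 (A : ApollonianNetwork) (k : ℕ) (hk : 10 ≤ k) :
    2 * porousExpDomNum (A.G k) ≤ (3 ^ (k - 8) + 5 : ℕ∞) := by
  classical
  set m := k - 7 with hm
  have hm3 : 3 ≤ m := by omega
  have hk7 : k = m + 7 := by omega
  obtain ⟨hfin, hcard⟩ := A.Vle_finite_card m (by omega)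
  -- the dominating set: all vertices of generation ≤ m, inside the subtype
  have hTfin : {s : {v : A.Vert // A.gen v ≤ k} | A.gen s.1 ≤ m}.Finite := by
    have : {s : {v : A.Vert // A.gen v ≤ k} | A.gen s.1 ≤ m} =
        (Subtype.val) ⁻¹' {v : A.Vert | A.gen v ≤ m} := rfl
    rw [this]
    exact Set.Finite.preimage (Subtype.coe_injective.injOn) hfin
  set S : Finset {v : A.Vert // A.gen v ≤ k} := hTfin.toFinset with hSdef
  have hS : ∀ s : {v : A.Vert // A.gen v ≤ k}, s ∈ S ↔ A.gen s.1 ≤ m := by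
    intro s
    simp [hSdef, Set.Finite.mem_toFinset]
  have hdom : IsPorousExpDomSet (A.G k) S := A.dom m k hm3 hk7 S hS
  -- cardinality bound
  have hScard : 2 * S.card ≤ 3 ^ (k - 8) + 5 := by
    have h1 : S.card = {s : {v : A.Vert // A.gen v ≤ k} | A.gen s.1 ≤ m}.ncard :=
      (Set.ncard_eq_toFinset_card _ hTfin).symm
    have h2 : {s : {v : A.Vert // A.gen v ≤ k} | A.gen s.1 ≤ m}.ncard ≤
        {v : A.Vert | A.gen v ≤ m}.ncard := by
      rw [← Set.ncard_image_of_injective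
        {s : {v : A.Vert // A.gen v ≤ k} | A.gen s.1 ≤ m} Subtype.coe_injective]
      exact Set.ncard_le_ncard (by rintro t ⟨s, hs, rfl⟩; exact hs) hfin
    have h3 : m - 1 = k - 8 := by omega
    rw [h3] at hcard
    omega
  -- conclude
  have hmem : (S.card : ℕ∞) ∈
      {n : ℕ∞ | ∃ S' : Finset {v : A.Vert // A.gen v ≤ k},
        IsPorousExpDomSet (A.G k) S' ∧ (S'.card : ℕ∞) = n} := ⟨S, hdom, rfl⟩
  have hle : porousExpDomNum (A.G k) ≤ (S.card : ℕ∞) := sInf_le hmem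
  calc 2 * porousExpDomNum (A.G k) ≤ 2 * (S.card : ℕ∞) := mul_le_mul_right hle 2
    _ ≤ (3 ^ (k - 8) + 5 : ℕ∞) := by
      have : ((2 * S.card : ℕ) : ℕ∞) ≤ ((3 ^ (k - 8) + 5 : ℕ) : ℕ∞) :=
        Nat.cast_le.mpr hScard
      push_cast at this
      convert this using 2 <;> norm_num
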